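/- A symmetric solution C of the matrix equation for the regular part of the Green's function is bisymmetric and determined by its first column: suppose C ∈ M_m(ℝ) is symmetric and satisfies (P − Λ) C = (1/(1 − p^{−1})) (P Λ^{−1} − (1/m) 𝟙𝟙ᵀ). Then C is bisymmetric (symmetric and centrosymmetric, i.e. JCJ = C for the exchange matrix J), and for all i, j ∈ {1, …, m}: if i ≥ j then C_{ij} = C_{i1} + C_{mj} − C_{m1}, and if i ≤ j then C_{ij} = C_{im} + C_{1j} − C_{1m}. -/
import Mathlib


/-- The matrix `P i j = (1 − p⁻¹) p^{−|i−j|}`. -/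
noncomputable def Pmat (p m : ℕ) : Matrix (Fin m) (Fin m) ℝ :=
  Matrix.of fun i j => (1 - (p : ℝ)⁻¹) * (p : ℝ) ^ (-|(i : ℤ) - (j : ℤ)|)

/-- The diagonal entries `Λ_i = Σ_j P i j`. -/
noncomputable def LamDiag (p m : ℕ) (i : Fin m) : ℝ := ∑ j, Pmat p m i j

/-- The `m × m` exchange matrix `J`, with `J i j = 1` iff `i + j = m - 1`
(0-based indexing, corresponding to `i + j = m + 1` in 1-based indexing). -/
def exchMatrix (m : ℕ) : Matrix (Fin m) (Fin m) ℝ :=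
  Matrix.of fun i j => if (i : ℕ) + (j : ℕ) = m - 1 then 1 else 0

lemma key3 {p : ℕ} (hp : 2 ≤ p) (a k : ℤ) :
    -(p:ℝ)⁻¹ * (p:ℝ) ^ (-|a - k|) + (1 + (p:ℝ)⁻¹^2) * (p:ℝ) ^ (-|a+1 - k|)
      - (p:ℝ)⁻¹ * (p:ℝ) ^ (-|a+2 - k|)
    = (1 - (p:ℝ)⁻¹^2) * (if a + 1 = k then 1 else 0) := by
  have hy0 : (p:ℝ) ≠ 0 := by
    have : (0:ℝ) < p := by exact_mod_cast Nat.lt_of_lt_of_le Nat.zero_lt_two hp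
    linarith
  have hxy : (p:ℝ)⁻¹ * (p:ℝ) = 1 := inv_mul_cancel₀ hy0
  have h1 : (p:ℝ) ^ (-1:ℤ) = (p:ℝ)⁻¹ := by simp
  have h2 : (p:ℝ) ^ (-2:ℤ) = (p:ℝ)⁻¹^2 := by
    rw [show (-2:ℤ) = -1 + -1 by norm_num, zpow_add₀ hy0, h1, sq]
  rcases lt_trichotomy k (a+1) with h | h | h
  · rw [if_neg (by omega), abs_of_nonneg (by omega : (0:ℤ) ≤ a - k),
      abs_of_nonneg (by omega : (0:ℤ) ≤ a+1 - k), abs_of_nonneg (by omega : (0:ℤ) ≤ a+2 - k)]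
    have e1 : -(a+1-k) = -(a-k) + -1 := by ring
    have e2 : -(a+2-k) = -(a-k) + -2 := by ring
    rw [e1, e2, zpow_add₀ hy0, zpow_add₀ hy0, h1, h2]; ring
  · rw [if_pos h.symm]
    rw [show a - k = -1 by omega, show a + 1 - k = 0 by omega, show a + 2 - k = 1 by omega]
    simp only [abs_neg, abs_one, abs_zero, neg_zero, zpow_zero, h1]
    ring
  · rw [if_neg (by omega), abs_of_nonpos (by omega : a - k ≤ 0),
      abs_of_nonpos (by omega : a+1 - k ≤ 0), abs_of_nonpos (by omega : a+2 - k ≤ 0)]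
    have e1 : -(-(a+1-k)) = (a-k) + 1 := by ring
    have e2 : -(-(a+2-k)) = (a-k) + 2 := by ring
    have e0 : -(-(a-k)) = (a-k) := by ring
    rw [e0, e1, e2, zpow_add₀ hy0, zpow_add₀ hy0]
    have h3 : (p:ℝ) ^ (1:ℤ) = (p:ℝ) := by simp
    have h4 : (p:ℝ) ^ (2:ℤ) = (p:ℝ) * (p:ℝ) := zpow_two _
    rw [h3, h4]
    linear_combination ((p:ℝ)⁻¹ - (p:ℝ)) * (p:ℝ) ^ (a-k) * hxy

lemma key2 {p : ℕ} (hp : 2 ≤ p) (a k : ℤ) (hk : k ≤ a + 1) :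
    (p:ℝ) ^ (-|a+1 - k|) - (p:ℝ)⁻¹ * (p:ℝ) ^ (-|a - k|)
    = (1 - (p:ℝ)⁻¹^2) * (if a + 1 = k then 1 else 0) := by
  have hy0 : (p:ℝ) ≠ 0 := by
    have : (0:ℝ) < p := by exact_mod_cast Nat.lt_of_lt_of_le Nat.zero_lt_two hp
    linarith
  have h1 : (p:ℝ) ^ (-1:ℤ) = (p:ℝ)⁻¹ := by simp
  rcases eq_or_lt_of_le hk with h | h
  · rw [if_pos h.symm]
    rw [show a - k = -1 by omega, show a + 1 - k = 0 by omega]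
    simp only [abs_neg, abs_one, abs_zero, neg_zero, zpow_zero, h1]
    ring
  · rw [if_neg (by omega), abs_of_nonneg (by omega : (0:ℤ) ≤ a - k),
      abs_of_nonneg (by omega : (0:ℤ) ≤ a+1 - k)]
    have e1 : -(a+1-k) = -(a-k) + -1 := by ring
    rw [e1, zpow_add₀ hy0, h1]; ring

lemma Pmat_pos {p m : ℕ} (hp : 2 ≤ p) (i j : Fin m) : 0 < Pmat p m i j := by
  have hp2 : (2:ℝ) ≤ (p:ℝ) := by exact_mod_cast hp
  have hx : (p:ℝ)⁻¹ < 1 := by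
    rw [inv_lt_one_iff₀]; right; linarith
  have hy : (0:ℝ) < (p:ℝ) := by linarith
  have : (0:ℝ) < (p:ℝ) ^ (-|(i:ℤ) - (j:ℤ)|) := zpow_pos hy _
  show 0 < (1 - (p:ℝ)⁻¹) * (p:ℝ) ^ (-|(i:ℤ) - (j:ℤ)|)
  have : (0:ℝ) < 1 - (p:ℝ)⁻¹ := by linarith
  positivity

lemma lam_pos {p m : ℕ} (hp : 2 ≤ p) (hm : 1 ≤ m) (i : Fin m) : 0 < LamDiag p m i := by
  have : Nonempty (Fin m) := ⟨⟨0, by omega⟩⟩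
  exact Finset.sum_pos (fun j _ => Pmat_pos hp i j) Finset.univ_nonempty

lemma sum3 {p m : ℕ} (hp : 2 ≤ p) {a : ℕ} (ha : a + 3 ≤ m) (g : Fin m → ℝ) :
    -(p:ℝ)⁻¹ * (∑ k, Pmat p m ⟨a, by omega⟩ k * g k)
      + (1 + (p:ℝ)⁻¹^2) * (∑ k, Pmat p m ⟨a+1, by omega⟩ k * g k)
      - (p:ℝ)⁻¹ * (∑ k, Pmat p m ⟨a+2, by omega⟩ k * g k)
    = (1 - (p:ℝ)⁻¹) * (1 - (p:ℝ)⁻¹^2) * g ⟨a+1, by omega⟩ := by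
  have hexp : -(p:ℝ)⁻¹ * (∑ k, Pmat p m ⟨a, by omega⟩ k * g k)
      + (1 + (p:ℝ)⁻¹^2) * (∑ k, Pmat p m ⟨a+1, by omega⟩ k * g k)
      - (p:ℝ)⁻¹ * (∑ k, Pmat p m ⟨a+2, by omega⟩ k * g k)
      = ∑ k, (-(p:ℝ)⁻¹ * Pmat p m ⟨a, by omega⟩ k + (1 + (p:ℝ)⁻¹^2) * Pmat p m ⟨a+1, by omega⟩ k
        - (p:ℝ)⁻¹ * Pmat p m ⟨a+2, by omega⟩ k) * g k := by
    rw [Finset.mul_sum, Finset.mul_sum, Finset.mul_sum, ← Finset.sum_add_distrib,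
      ← Finset.sum_sub_distrib]
    exact Finset.sum_congr rfl fun k _ => by ring
  rw [hexp]
  have hpt : ∀ k : Fin m,
      (-(p:ℝ)⁻¹ * Pmat p m ⟨a, by omega⟩ k + (1 + (p:ℝ)⁻¹^2) * Pmat p m ⟨a+1, by omega⟩ k
        - (p:ℝ)⁻¹ * Pmat p m ⟨a+2, by omega⟩ k) * g k
      = ((1 - (p:ℝ)⁻¹) * (1 - (p:ℝ)⁻¹^2)) * ((if (⟨a+1, by omega⟩ : Fin m) = k then 1 else 0) * g k) := by
    intro k
    have h3 := key3 hp (a:ℤ) (k:ℤ)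
    have e0 : Pmat p m ⟨a, by omega⟩ k = (1-(p:ℝ)⁻¹) * (p:ℝ)^(-|(a:ℤ) - (k:ℤ)|) := by
      simp [Pmat]
    have e1 : Pmat p m ⟨a+1, by omega⟩ k = (1-(p:ℝ)⁻¹) * (p:ℝ)^(-|(a:ℤ)+1 - (k:ℤ)|) := by
      simp [Pmat]
    have e2 : Pmat p m ⟨a+2, by omega⟩ k = (1-(p:ℝ)⁻¹) * (p:ℝ)^(-|(a:ℤ)+2 - (k:ℤ)|) := by
      simp [Pmat]
    have hif : (if (a:ℤ) + 1 = (k:ℤ) then (1:ℝ) else 0) = (if (⟨a+1, by omega⟩ : Fin m) = k then 1 else 0) := by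
      congr 1
      simp [Fin.ext_iff]
      constructor
      · intro h; omega
      · intro h; omega
    rw [e0, e1, e2]
    rw [hif] at h3
    linear_combination g k * (1 - (p:ℝ)⁻¹) * h3
  rw [Finset.sum_congr rfl (fun k _ => hpt k), ← Finset.mul_sum]
  simp

lemma sum2 {p m : ℕ} (hp : 2 ≤ p) (hm2 : 2 ≤ m) (g : Fin m → ℝ) :
    (∑ k, Pmat p m ⟨m-1, by omega⟩ k * g k)
      - (p:ℝ)⁻¹ * (∑ k, Pmat p m ⟨m-2, by omega⟩ k * g k)
    = (1 - (p:ℝ)⁻¹) * (1 - (p:ℝ)⁻¹^2) * g ⟨m-1, by omega⟩ := by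
  have hexp : (∑ k, Pmat p m ⟨m-1, by omega⟩ k * g k)
      - (p:ℝ)⁻¹ * (∑ k, Pmat p m ⟨m-2, by omega⟩ k * g k)
      = ∑ k, (Pmat p m ⟨m-1, by omega⟩ k - (p:ℝ)⁻¹ * Pmat p m ⟨m-2, by omega⟩ k) * g k := by
    rw [Finset.mul_sum, ← Finset.sum_sub_distrib]
    exact Finset.sum_congr rfl fun k _ => by ring
  rw [hexp]
  have hpt : ∀ k : Fin m,
      (Pmat p m ⟨m-1, by omega⟩ k - (p:ℝ)⁻¹ * Pmat p m ⟨m-2, by omega⟩ k) * g k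
      = ((1 - (p:ℝ)⁻¹) * (1 - (p:ℝ)⁻¹^2)) * ((if (⟨m-1, by omega⟩ : Fin m) = k then 1 else 0) * g k) := by
    intro k
    have h2 := key2 hp ((m:ℤ)-2) (k:ℤ) (by have := k.isLt; omega)
    have e1 : Pmat p m ⟨m-1, by omega⟩ k = (1-(p:ℝ)⁻¹) * (p:ℝ)^(-|(m:ℤ)-2+1 - (k:ℤ)|) := by
      show (1-(p:ℝ)⁻¹) * (p:ℝ)^(-|((m-1:ℕ):ℤ) - (k:ℤ)|) = _
      rw [show ((m-1:ℕ):ℤ) = (m:ℤ)-2+1 by omega]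
    have e0 : Pmat p m ⟨m-2, by omega⟩ k = (1-(p:ℝ)⁻¹) * (p:ℝ)^(-|(m:ℤ)-2 - (k:ℤ)|) := by
      show (1-(p:ℝ)⁻¹) * (p:ℝ)^(-|((m-2:ℕ):ℤ) - (k:ℤ)|) = _
      rw [show ((m-2:ℕ):ℤ) = (m:ℤ)-2 by omega]
    have hif : (if (m:ℤ)-2 + 1 = (k:ℤ) then (1:ℝ) else 0) = (if (⟨m-1, by omega⟩ : Fin m) = k then 1 else 0) := by
      congr 1
      simp [Fin.ext_iff]
      constructor
      · intro h; omega
      · intro h; omega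
    rw [e0, e1]
    rw [hif] at h2
    linear_combination g k * (1 - (p:ℝ)⁻¹) * h2
  rw [Finset.sum_congr rfl (fun k _ => hpt k), ← Finset.mul_sum]
  simp

lemma entry_eq {p m : ℕ} (C : Matrix (Fin m) (Fin m) ℝ)
    (hCeq : (Pmat p m - Matrix.diagonal (LamDiag p m)) * C =
      (1 / (1 - (p : ℝ)⁻¹)) •
        (Pmat p m * Matrix.diagonal (fun i => (LamDiag p m i)⁻¹) -
          (1 / (m : ℝ)) • Matrix.of (fun _ _ => (1 : ℝ)))) (i j : Fin m) :
    ∑ k, Pmat p m i k * C k j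
      = LamDiag p m i * C i j
        + (1/(1-(p:ℝ)⁻¹)) * (Pmat p m i j * (LamDiag p m j)⁻¹ - 1/(m:ℝ)) := by
  have h := congrFun (congrFun hCeq i) j
  simp only [Matrix.sub_apply, Matrix.mul_apply, Matrix.smul_apply, Matrix.of_apply,
    smul_eq_mul, mul_one, Matrix.diagonal_apply, sub_mul, ite_mul, mul_ite, zero_mul,
    mul_zero, Finset.sum_sub_distrib, Finset.sum_ite_eq, Finset.sum_ite_eq',
    Finset.mem_univ, if_true] at h
  linarith [h]

lemma lam3 {p m : ℕ} (hp : 2 ≤ p) {a : ℕ} (ha : a + 3 ≤ m) :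
    -(p:ℝ)⁻¹ * LamDiag p m ⟨a, by omega⟩ + (1 + (p:ℝ)⁻¹^2) * LamDiag p m ⟨a+1, by omega⟩
      - (p:ℝ)⁻¹ * LamDiag p m ⟨a+2, by omega⟩
    = (1 - (p:ℝ)⁻¹) * (1 - (p:ℝ)⁻¹^2) := by
  have h := sum3 hp ha (fun _ => (1:ℝ))
  simpa [LamDiag] using h

lemma lam2 {p m : ℕ} (hp : 2 ≤ p) (hm2 : 2 ≤ m) :
    LamDiag p m ⟨m-1, by omega⟩ - (p:ℝ)⁻¹ * LamDiag p m ⟨m-2, by omega⟩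
    = (1 - (p:ℝ)⁻¹) * (1 - (p:ℝ)⁻¹^2) := by
  have h := sum2 hp hm2 (fun _ => (1:ℝ))
  simpa [LamDiag] using h

lemma del3 {p m : ℕ} (hp : 2 ≤ p) {a : ℕ} (ha : a + 3 ≤ m) {j : Fin m} (hj : (j:ℕ) ≠ a+1) :
    -(p:ℝ)⁻¹ * Pmat p m ⟨a, by omega⟩ j + (1 + (p:ℝ)⁻¹^2) * Pmat p m ⟨a+1, by omega⟩ j
      - (p:ℝ)⁻¹ * Pmat p m ⟨a+2, by omega⟩ j = 0 := by
  have h := sum3 hp ha (fun k => if k = j then (1:ℝ) else 0)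
  simp only [mul_ite, mul_one, mul_zero, Finset.sum_ite_eq', Finset.mem_univ, if_true] at h
  rw [if_neg (by simp [Fin.ext_iff]; omega)] at h
  simpa using h

lemma del2 {p m : ℕ} (hp : 2 ≤ p) (hm2 : 2 ≤ m) {j : Fin m} (hj : (j:ℕ) ≠ m-1) :
    Pmat p m ⟨m-1, by omega⟩ j - (p:ℝ)⁻¹ * Pmat p m ⟨m-2, by omega⟩ j = 0 := by
  have h := sum2 hp hm2 (fun k => if k = j then (1:ℝ) else 0)
  simp only [mul_ite, mul_one, mul_zero, Finset.sum_ite_eq', Finset.mem_univ, if_true] at h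
  rw [if_neg (by simp [Fin.ext_iff]; omega)] at h
  simpa using h

lemma hom3 {p m : ℕ} (hp : 2 ≤ p) (C : Matrix (Fin m) (Fin m) ℝ)
    (hCeq : (Pmat p m - Matrix.diagonal (LamDiag p m)) * C =
      (1 / (1 - (p : ℝ)⁻¹)) •
        (Pmat p m * Matrix.diagonal (fun i => (LamDiag p m i)⁻¹) -
          (1 / (m : ℝ)) • Matrix.of (fun _ _ => (1 : ℝ))))
    {a : ℕ} (ha : a + 3 ≤ m) {j j' : Fin m} (hj : (j:ℕ) ≠ a+1) (hj' : (j':ℕ) ≠ a+1) :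
    -(p:ℝ)⁻¹ * LamDiag p m ⟨a, by omega⟩ * (C ⟨a, by omega⟩ j - C ⟨a, by omega⟩ j')
      + (1 + (p:ℝ)⁻¹^2) * LamDiag p m ⟨a+1, by omega⟩ * (C ⟨a+1, by omega⟩ j - C ⟨a+1, by omega⟩ j')
      - (p:ℝ)⁻¹ * LamDiag p m ⟨a+2, by omega⟩ * (C ⟨a+2, by omega⟩ j - C ⟨a+2, by omega⟩ j')
    = (1 - (p:ℝ)⁻¹) * (1 - (p:ℝ)⁻¹^2) * (C ⟨a+1, by omega⟩ j - C ⟨a+1, by omega⟩ j') := by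
  have S := sum3 hp ha (fun k => C k j - C k j')
  have hsplit : ∀ (i : Fin m), (∑ k, Pmat p m i k * (C k j - C k j'))
      = (∑ k, Pmat p m i k * C k j) - ∑ k, Pmat p m i k * C k j' := by
    intro i; rw [← Finset.sum_sub_distrib]; exact Finset.sum_congr rfl fun k _ => by ring
  rw [hsplit, hsplit, hsplit] at S
  have E1 := entry_eq C hCeq ⟨a, by omega⟩ j
  have E2 := entry_eq C hCeq ⟨a+1, by omega⟩ j
  have E3 := entry_eq C hCeq ⟨a+2, by omega⟩ j
  have F1 := entry_eq C hCeq ⟨a, by omega⟩ j'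
  have F2 := entry_eq C hCeq ⟨a+1, by omega⟩ j'
  have F3 := entry_eq C hCeq ⟨a+2, by omega⟩ j'
  have Dj := del3 hp ha hj
  have Dj' := del3 hp ha hj'
  linear_combination S + (p:ℝ)⁻¹ * E1 - (1 + (p:ℝ)⁻¹^2) * E2 + (p:ℝ)⁻¹ * E3
    - (p:ℝ)⁻¹ * F1 + (1 + (p:ℝ)⁻¹^2) * F2 - (p:ℝ)⁻¹ * F3
    - (1/(1-(p:ℝ)⁻¹)) * (LamDiag p m j)⁻¹ * Dj
    + (1/(1-(p:ℝ)⁻¹)) * (LamDiag p m j')⁻¹ * Dj'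

lemma hom2 {p m : ℕ} (hp : 2 ≤ p) (hm2 : 2 ≤ m) (C : Matrix (Fin m) (Fin m) ℝ)
    (hCeq : (Pmat p m - Matrix.diagonal (LamDiag p m)) * C =
      (1 / (1 - (p : ℝ)⁻¹)) •
        (Pmat p m * Matrix.diagonal (fun i => (LamDiag p m i)⁻¹) -
          (1 / (m : ℝ)) • Matrix.of (fun _ _ => (1 : ℝ))))
    {j j' : Fin m} (hj : (j:ℕ) ≠ m-1) (hj' : (j':ℕ) ≠ m-1) :
    LamDiag p m ⟨m-1, by omega⟩ * (C ⟨m-1, by omega⟩ j - C ⟨m-1, by omega⟩ j')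
      - (p:ℝ)⁻¹ * LamDiag p m ⟨m-2, by omega⟩ * (C ⟨m-2, by omega⟩ j - C ⟨m-2, by omega⟩ j')
    = (1 - (p:ℝ)⁻¹) * (1 - (p:ℝ)⁻¹^2) * (C ⟨m-1, by omega⟩ j - C ⟨m-1, by omega⟩ j') := by
  have S := sum2 hp hm2 (fun k => C k j - C k j')
  have hsplit : ∀ (i : Fin m), (∑ k, Pmat p m i k * (C k j - C k j'))
      = (∑ k, Pmat p m i k * C k j) - ∑ k, Pmat p m i k * C k j' := by
    intro i; rw [← Finset.sum_sub_distrib]; exact Finset.sum_congr rfl fun k _ => by ring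
  rw [hsplit, hsplit] at S
  have E1 := entry_eq C hCeq ⟨m-1, by omega⟩ j
  have E2 := entry_eq C hCeq ⟨m-2, by omega⟩ j
  have F1 := entry_eq C hCeq ⟨m-1, by omega⟩ j'
  have F2 := entry_eq C hCeq ⟨m-2, by omega⟩ j'
  have Dj := del2 hp hm2 hj
  have Dj' := del2 hp hm2 hj'
  linear_combination S - E1 + (p:ℝ)⁻¹ * E2 + F1 - (p:ℝ)⁻¹ * F2
    - (1/(1-(p:ℝ)⁻¹)) * (LamDiag p m j)⁻¹ * Dj
    + (1/(1-(p:ℝ)⁻¹)) * (LamDiag p m j')⁻¹ * Dj'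

lemma main2 {p m : ℕ} (hp : 2 ≤ p) (hm : 1 ≤ m) (C : Matrix (Fin m) (Fin m) ℝ)
    (hCeq : (Pmat p m - Matrix.diagonal (LamDiag p m)) * C =
      (1 / (1 - (p : ℝ)⁻¹)) •
        (Pmat p m * Matrix.diagonal (fun i => (LamDiag p m i)⁻¹) -
          (1 / (m : ℝ)) • Matrix.of (fun _ _ => (1 : ℝ))))
    (i j : Fin m) (hij : (j : ℕ) ≤ (i : ℕ)) :
    C i j = C i ⟨0, by omega⟩ + C ⟨m - 1, by omega⟩ j -
        C ⟨m - 1, by omega⟩ ⟨0, by omega⟩ := by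
  have hx : (0:ℝ) < (p:ℝ)⁻¹ := by
    have : (0:ℝ) < (p:ℝ) := by exact_mod_cast Nat.lt_of_lt_of_le Nat.zero_lt_two hp
    positivity
  have key : ∀ d : ℕ, ∀ b : ℕ, ∀ hb2 : b < m, b + d = m - 1 → (j : ℕ) ≤ b →
      C ⟨b, hb2⟩ j - C ⟨b, hb2⟩ ⟨0, by omega⟩
        - C ⟨m-1, by omega⟩ j + C ⟨m-1, by omega⟩ ⟨0, by omega⟩ = 0 := by
    intro d
    induction d using Nat.strong_induction_on with
    | _ d IH =>
      intro b hb2 hb hjb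
      match d, IH with
      | 0, _ =>
        have hbe : b = m - 1 := by omega
        subst hbe
        ring
      | 1, _ =>
        have hbe : b = m - 2 := by omega
        have hm2 : 2 ≤ m := by omega
        subst hbe
        have hj1 : (j:ℕ) ≠ m-1 := by omega
        have hz1 : ((⟨0, by omega⟩ : Fin m) : ℕ) ≠ m-1 := by simp; omega
        have h2 := hom2 hp hm2 C hCeq hj1 hz1
        have l2 := lam2 (m := m) hp hm2
        have hprod : ((p:ℝ)⁻¹ * LamDiag p m ⟨m-2, by omega⟩) *
            (C ⟨m-2, by omega⟩ j - C ⟨m-2, by omega⟩ ⟨0, by omega⟩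
              - C ⟨m-1, by omega⟩ j + C ⟨m-1, by omega⟩ ⟨0, by omega⟩) = 0 := by
          linear_combination (-1) * h2
            + (C ⟨m-1, by omega⟩ j - C ⟨m-1, by omega⟩ ⟨0, by omega⟩) * l2
        have hne : ((p:ℝ)⁻¹ * LamDiag p m ⟨m-2, by omega⟩) ≠ 0 :=
          ne_of_gt (mul_pos hx (lam_pos hp hm _))
        exact (mul_eq_zero.mp hprod).resolve_left hne
      | (e+2), IH =>
        have ha : b + 3 ≤ m := by omega
        have hj1 : (j:ℕ) ≠ b+1 := by omega
        have hz1 : ((⟨0, by omega⟩ : Fin m) : ℕ) ≠ b+1 := by simp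
        have h3 := hom3 hp C hCeq ha hj1 hz1
        have l3 := lam3 (m := m) hp ha
        have IH1 := IH (e+1) (by omega) (b+1) (by omega) (by omega) (by omega)
        have IH2 := IH e (by omega) (b+2) (by omega) (by omega) (by omega)
        have hprod : ((p:ℝ)⁻¹ * LamDiag p m ⟨b, by omega⟩) *
            (C ⟨b, by omega⟩ j - C ⟨b, by omega⟩ ⟨0, by omega⟩
              - C ⟨m-1, by omega⟩ j + C ⟨m-1, by omega⟩ ⟨0, by omega⟩) = 0 := by
          linear_combination (-1) * h3
            + (C ⟨m-1, by omega⟩ j - C ⟨m-1, by omega⟩ ⟨0, by omega⟩) * l3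
            + ((1 + (p:ℝ)⁻¹^2) * LamDiag p m ⟨b+1, by omega⟩
                - (1 - (p:ℝ)⁻¹) * (1 - (p:ℝ)⁻¹^2)) * IH1
            - (p:ℝ)⁻¹ * LamDiag p m ⟨b+2, by omega⟩ * IH2
        have hne : ((p:ℝ)⁻¹ * LamDiag p m ⟨b, by omega⟩) ≠ 0 :=
          ne_of_gt (mul_pos hx (lam_pos hp hm _))
        exact (mul_eq_zero.mp hprod).resolve_left hne
  have hfin := key (m - 1 - (i:ℕ)) (i:ℕ) (by omega) (by omega) hij
  have hi : (⟨(i:ℕ), by omega⟩ : Fin m) = i := rfl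
  rw [hi] at hfin
  linarith [hfin]

def sig (m : ℕ) (k : Fin m) : Fin m := ⟨m - 1 - (k:ℕ), by have := k.isLt; omega⟩

lemma sig_sig {m : ℕ} (k : Fin m) : sig m (sig m k) = k := by
  have := k.isLt
  simp [sig, Fin.ext_iff]
  omega

def sigEquiv (m : ℕ) : Equiv.Perm (Fin m) := ⟨sig m, sig m, sig_sig, sig_sig⟩

lemma Jmul {m : ℕ} (A : Matrix (Fin m) (Fin m) ℝ) (i j : Fin m) :
    (exchMatrix m * A) i j = A (sig m i) j := by
  rw [Matrix.mul_apply]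
  rw [Finset.sum_eq_single (sig m i)]
  · have : exchMatrix m i (sig m i) = 1 := by
      simp only [exchMatrix, Matrix.of_apply]
      rw [if_pos]
      have := i.isLt
      simp [sig]
      omega
    rw [this, one_mul]
  · intro k _ hk
    have : exchMatrix m i k = 0 := by
      simp only [exchMatrix, Matrix.of_apply]
      rw [if_neg]
      intro h
      apply hk
      have := i.isLt; have := k.isLt
      simp [sig, Fin.ext_iff]
      omega
    rw [this, zero_mul]
  · intro h; exact absurd (Finset.mem_univ _) h

lemma mulJ {m : ℕ} (A : Matrix (Fin m) (Fin m) ℝ) (i j : Fin m) :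
    (A * exchMatrix m) i j = A i (sig m j) := by
  rw [Matrix.mul_apply]
  rw [Finset.sum_eq_single (sig m j)]
  · have : exchMatrix m (sig m j) j = 1 := by
      simp only [exchMatrix, Matrix.of_apply]
      rw [if_pos]
      have := j.isLt
      simp [sig]
      omega
    rw [this, mul_one]
  · intro k _ hk
    have : exchMatrix m k j = 0 := by
      simp only [exchMatrix, Matrix.of_apply]
      rw [if_neg]
      intro h
      apply hk
      have := j.isLt; have := k.isLt
      simp [sig, Fin.ext_iff]
      omega
    rw [this, mul_zero]
  · intro h; exact absurd (Finset.mem_univ _) h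

lemma Psig {p m : ℕ} (i j : Fin m) : Pmat p m (sig m i) (sig m j) = Pmat p m i j := by
  have hi := i.isLt; have hj := j.isLt
  simp only [Pmat, Matrix.of_apply]
  congr 1
  rw [show (((sig m i) : ℕ) : ℤ) = (m:ℤ) - 1 - (i:ℕ) by simp [sig]; omega,
    show (((sig m j) : ℕ) : ℤ) = (m:ℤ) - 1 - (j:ℕ) by simp [sig]; omega,
    show (m:ℤ) - 1 - (i:ℕ) - ((m:ℤ) - 1 - (j:ℕ)) = (j:ℤ) - (i:ℤ) by push_cast; ring,
    abs_sub_comm]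

lemma lamsig {p m : ℕ} (i : Fin m) : LamDiag p m (sig m i) = LamDiag p m i := by
  unfold LamDiag
  calc ∑ j, Pmat p m (sig m i) j
      = ∑ j, Pmat p m (sig m i) (sig m j) :=
        (Fintype.sum_equiv (sigEquiv m) (fun j => Pmat p m (sig m i) (sig m j))
          (fun j => Pmat p m (sig m i) j) (fun j => rfl)).symm
    _ = ∑ j, Pmat p m i j := Finset.sum_congr rfl fun j _ => Psig i j

lemma main1 {p m : ℕ} (hp : 2 ≤ p) (hm : 1 ≤ m) (C : Matrix (Fin m) (Fin m) ℝ)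
    (hC : C.IsSymm)
    (hCeq : (Pmat p m - Matrix.diagonal (LamDiag p m)) * C =
      (1 / (1 - (p : ℝ)⁻¹)) •
        (Pmat p m * Matrix.diagonal (fun i => (LamDiag p m i)⁻¹) -
          (1 / (m : ℝ)) • Matrix.of (fun _ _ => (1 : ℝ)))) :
    exchMatrix m * C * exchMatrix m = C := by
  have hF : ∀ i j : Fin m, ∑ k, Pmat p m i k * (C k j - C (sig m k) (sig m j))
      = LamDiag p m i * (C i j - C (sig m i) (sig m j)) := by
    intro i j
    have h1 := entry_eq C hCeq i j
    have h2 := entry_eq C hCeq (sig m i) (sig m j)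
    rw [lamsig, lamsig, Psig] at h2
    have hre : ∑ k, Pmat p m (sig m i) k * C k (sig m j)
        = ∑ k, Pmat p m i k * C (sig m k) (sig m j) := by
      refine ((Fintype.sum_equiv (sigEquiv m)
        (fun k => Pmat p m (sig m i) (sig m k) * C (sig m k) (sig m j))
        (fun k => Pmat p m (sig m i) k * C k (sig m j)) (fun k => rfl)).symm).trans ?_
      exact Finset.sum_congr rfl fun k _ => by rw [Psig]
    rw [hre] at h2
    have hsplit : ∑ k, Pmat p m i k * (C k j - C (sig m k) (sig m j))
        = (∑ k, Pmat p m i k * C k j) - ∑ k, Pmat p m i k * C (sig m k) (sig m j) := by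
      rw [← Finset.sum_sub_distrib]; exact Finset.sum_congr rfl fun k _ => by ring
    rw [hsplit]
    linear_combination h1 - h2
  have hconst : ∀ (j k k' : Fin m),
      C k j - C (sig m k) (sig m j) = C k' j - C (sig m k') (sig m j) := by
    intro j k k'
    set v : Fin m → ℝ := fun k => C k j - C (sig m k) (sig m j) with hv
    obtain ⟨i0, -, hmax⟩ := Finset.exists_max_image Finset.univ v
      ⟨⟨0, by omega⟩, Finset.mem_univ _⟩
    have hzero : ∑ k, Pmat p m i0 k * (v i0 - v k) = 0 := by
      have hlam : LamDiag p m i0 * v i0 = ∑ k, Pmat p m i0 k * v i0 := by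
        rw [LamDiag, Finset.sum_mul]
      have hf := hF i0 j
      have hsplit : ∑ k, Pmat p m i0 k * (v i0 - v k)
          = (∑ k, Pmat p m i0 k * v i0) - ∑ k, Pmat p m i0 k * v k := by
        rw [← Finset.sum_sub_distrib]; exact Finset.sum_congr rfl fun k _ => by ring
      rw [hsplit, ← hlam]
      have : ∑ k, Pmat p m i0 k * v k = LamDiag p m i0 * v i0 := hf
      rw [this]
      ring
    have hall : ∀ k : Fin m, v k = v i0 := by
      have h0 := (Finset.sum_eq_zero_iff_of_nonneg (fun k _ =>
        mul_nonneg (le_of_lt (Pmat_pos hp i0 k))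
          (sub_nonneg.mpr (hmax k (Finset.mem_univ k))))).mp hzero
      intro k
      have hk := h0 k (Finset.mem_univ k)
      have hP := Pmat_pos hp i0 k
      have := mul_eq_zero.mp hk
      rcases this with h | h
      · exact absurd h (ne_of_gt hP)
      · linarith [h]
    exact (hall k).trans (hall k').symm
  have hsymC : ∀ i j : Fin m, C j i = C i j := fun i j => congrFun (congrFun hC i) j
  have hsymF : ∀ i j : Fin m, C i j - C (sig m i) (sig m j)
      = C j i - C (sig m j) (sig m i) := by
    intro i j
    rw [hsymC j i, hsymC (sig m j) (sig m i)]
  have hallconst : ∀ i j i' j' : Fin m, C i j - C (sig m i) (sig m j)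
      = C i' j' - C (sig m i') (sig m j') := by
    intro i j i' j'
    calc C i j - C (sig m i) (sig m j) = C i' j - C (sig m i') (sig m j) := hconst j i i'
      _ = C j i' - C (sig m j) (sig m i') := hsymF i' j
      _ = C j' i' - C (sig m j') (sig m i') := hconst i' j j'
      _ = C i' j' - C (sig m i') (sig m j') := (hsymF i' j').symm
  have hFzero : ∀ i j : Fin m, C (sig m i) (sig m j) = C i j := by
    intro i j
    have h1 := hallconst i j (sig m i) (sig m j)
    rw [sig_sig, sig_sig] at h1
    linarith
  ext i j
  rw [mulJ, Jmul, hFzero]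

/-- A symmetric solution `C` of the matrix equation for the regular
part of the Green's function is bisymmetric and determined by its first column: if `C`
is symmetric and `(P − Λ) C = (1/(1 − p⁻¹))(P Λ⁻¹ − (1/m) 𝟙𝟙ᵀ)`, then `J C J = C`,
and `C_{ij} = C_{i1} + C_{mj} − C_{m1}` for `i ≥ j`, `C_{ij} = C_{im} + C_{1j} − C_{1m}`
for `i ≤ j` (here stated with 0-based indices: column `1` is index `0`, column `m` is
index `m−1`). -/
theorem regular_part_bisymmetric (p : ℕ) (hp : p.Prime) (m : ℕ) (hm : 1 ≤ m)
    (C : Matrix (Fin m) (Fin m) ℝ) (hC : C.IsSymm)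
    (hCeq : (Pmat p m - Matrix.diagonal (LamDiag p m)) * C =
      (1 / (1 - (p : ℝ)⁻¹)) •
        (Pmat p m * Matrix.diagonal (fun i => (LamDiag p m i)⁻¹) -
          (1 / (m : ℝ)) • Matrix.of (fun _ _ => (1 : ℝ)))) :
    exchMatrix m * C * exchMatrix m = C ∧
    (∀ i j : Fin m, (j : ℕ) ≤ (i : ℕ) →
      C i j = C i ⟨0, by omega⟩ + C ⟨m - 1, by omega⟩ j -
        C ⟨m - 1, by omega⟩ ⟨0, by omega⟩) ∧
    (∀ i j : Fin m, (i : ℕ) ≤ (j : ℕ) →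
      C i j = C i ⟨m - 1, by omega⟩ + C ⟨0, by omega⟩ j -
        C ⟨0, by omega⟩ ⟨m - 1, by omega⟩) := by
  have hp2 : 2 ≤ p := hp.two_le
  have hsymC : ∀ i j : Fin m, C j i = C i j := fun i j => congrFun (congrFun hC i) j
  refine ⟨main1 hp2 hm C hC hCeq, fun i j h => main2 hp2 hm C hCeq i j h, fun i j h => ?_⟩
  have h2 := main2 hp2 hm C hCeq j i h
  have s1 := hsymC i j
  have s2 := hsymC ⟨0, by omega⟩ j
  have s3 := hsymC i (⟨m-1, by omega⟩ : Fin m)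
  have s4 := hsymC (⟨0, by omega⟩ : Fin m) (⟨m-1, by omega⟩ : Fin m)
  linarith
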